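/- Let N ≥ 1, 1 ≤ d ≤ N−1, and let m, m′ be integers with |m|, |m′| ≤ N−d. With ρ_d(m,N) := Tr_{first N−d sites}( |g_m^N⟩⟨g_m^N| ) the reduced density matrix of |g_m^N⟩ on d consecutive sites, the trace distance satisfies ‖ρ_d(m,N) − ρ_d(m′,N)‖₁ = Σ_{r=−d}^{d} |g^d_r| · | |g^{N−d}_{m−r}| / |g^N_m| − |g^{N−d}_{m′−r}| / |g^N_{m′}| |. -/

import Mathlib

open scoped BigOperators ComplexOrder

noncomputable section

def traceNorm {n : Type*} [Fintype n] [DecidableEq n] (A : Matrix n n ℂ) : ℝ :=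
  (let hA := Matrix.posSemidef_conjTranspose_mul_self A;
    (hA.1.eigenvectorUnitary.1 *
      Matrix.diagonal (fun i => ((Real.sqrt (hA.1.eigenvalues i) : ℝ) : ℂ)) *
      (star hA.1.eigenvectorUnitary : Matrix n n ℂ))).trace.re

def dotc {n : Type*} [Fintype n] (v w : n → ℂ) : ℂ := ∑ x, star (v x) * w x

def outer {n : Type*} (v w : n → ℂ) : Matrix n n ℂ := fun x y => v x * star (w y)

def finShift {N : ℕ} (i : Fin N) : Fin N := ⟨(i.1 + 1) % N, Nat.mod_lt _ i.pos⟩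

/-- configurations of a chain of `N` spin-1's; the basis label `0,1,2` corresponds
to the spin value `-1,0,+1` -/
abbrev Conf3 (N : ℕ) := Fin N → Fin 3

/-- the total spin (coordinate sum) of a spin-1 configuration -/
def wsum {L : ℕ} (w : Conf3 L) : ℤ := ∑ j, (((w j : ℕ) : ℤ) - 1)

/-- the number of strings in `{-1,0,1}^L` with coordinate sum `m` -/
def gcard (L : ℕ) (m : ℤ) : ℕ :=
  (Finset.univ.filter (fun w : Conf3 L => wsum w = m)).card

/-- the state `|g_m^L⟩`: normalized uniform superposition of all strings of sum `m` -/
def gstate (L : ℕ) (m : ℤ) : Conf3 L → ℂ :=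
  fun w => if wsum w = m then ((Real.sqrt (gcard L m) : ℝ)⁻¹ : ℂ) else 0

/-- splitting a chain of `N` sites into the first `N - d` sites and the last `d` sites -/
def joinConf3 {N : ℕ} (d : ℕ) (a : Fin (N - d) → Fin 3) (b : Fin d → Fin 3) : Conf3 N :=
  fun i => if h : i.1 < N - d then a ⟨i.1, h⟩
    else b ⟨i.1 - (N - d), by have := i.isLt; omega⟩

/-- the reduced density matrix of `|g_m^N⟩` on the last `d` sites -/
def gRDM (N d : ℕ) (m : ℤ) : Matrix (Fin d → Fin 3) (Fin d → Fin 3) ℂ :=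
  fun a a' => ∑ b : Fin (N - d) → Fin 3,
    gstate N m (joinConf3 d b a) * star (gstate N m (joinConf3 d b a'))

/-- `F` acts (possibly) nontrivially only on the sites in `S` -/
def ActsOn3 {N : ℕ} (S : Finset (Fin N)) (F : Matrix (Conf3 N) (Conf3 N) ℂ) : Prop :=
  ∃ F' : Matrix ({i // i ∈ S} → Fin 3) ({i // i ∈ S} → Fin 3) ℂ,
    ∀ x y : Conf3 N,
      F x y = if (∀ i, i ∉ S → x i = y i)
        then F' (fun i => x i.1) (fun i => y i.1) else 0

def cyclInterval {N : ℕ} (j : Fin N) (len : ℕ) : Finset (Fin N) :=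
  (Finset.range len).image (fun t => ⟨(j.1 + t) % N, Nat.mod_lt _ j.pos⟩)

def combineConf3 {N : ℕ} (S : Finset (Fin N)) (a : {i // i ∈ S} → Fin 3)
    (b : {i // i ∉ S} → Fin 3) : Conf3 N :=
  fun i => if h : i ∈ S then a ⟨i, h⟩ else b ⟨i, h⟩

/-- partial trace over the complement of `S` -/
def ptrace3 {N : ℕ} (S : Finset (Fin N)) (M : Matrix (Conf3 N) (Conf3 N) ℂ) :
    Matrix ({i // i ∈ S} → Fin 3) ({i // i ∈ S} → Fin 3) ℂ :=
  fun a a' => ∑ b : {i // i ∉ S} → Fin 3, M (combineConf3 S a b) (combineConf3 S a' b)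

/-- the rank-one projector `|v⟩⟨v|` on the pair of sites `(j, j+1)` (periodic) -/
def twoSiteProj {N : ℕ} (j : Fin N) (v : Fin 3 → Fin 3 → ℂ) :
    Matrix (Conf3 N) (Conf3 N) ℂ :=
  fun x y => v (x j) (x (finShift j)) * star (v (y j) (y (finShift j))) *
    (if ∀ i, i ≠ j → i ≠ finShift j → x i = y i then 1 else 0)

/-- `|F⟩ = (|ud⟩ - |00⟩)/√2` (here `u = 2`, `0 = 1`, `d = 0`) -/
def vecF : Fin 3 → Fin 3 → ℂ :=
  fun p q => ((if p = 2 ∧ q = 0 then 1 else 0) - (if p = 1 ∧ q = 1 then 1 else 0))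
    / (Real.sqrt 2 : ℂ)

/-- `|U⟩ = (|0u⟩ - |u0⟩)/√2` -/
def vecU : Fin 3 → Fin 3 → ℂ :=
  fun p q => ((if p = 1 ∧ q = 2 then 1 else 0) - (if p = 2 ∧ q = 1 then 1 else 0))
    / (Real.sqrt 2 : ℂ)

/-- `|D⟩ = (|0d⟩ - |d0⟩)/√2` -/
def vecD : Fin 3 → Fin 3 → ℂ :=
  fun p q => ((if p = 1 ∧ q = 0 then 1 else 0) - (if p = 0 ∧ q = 1 then 1 else 0))
    / (Real.sqrt 2 : ℂ)

/-- the spin-1 Motzkin Hamiltonian with periodic boundary conditions -/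
def motzkinH (N : ℕ) : Matrix (Conf3 N) (Conf3 N) ℂ :=
  ∑ j : Fin N, (twoSiteProj j vecF + twoSiteProj j vecU + twoSiteProj j vecD)

/-- one application of a local move `(u,d) ↔ (0,0)`, `(0,u) ↔ (u,0)`, `(0,d) ↔ (d,0)`
on a cyclically adjacent pair of sites -/
def MotzkinStep {N : ℕ} (x y : Conf3 N) : Prop :=
  ∃ j : Fin N,
    (∀ i, i ≠ j → i ≠ finShift j → x i = y i) ∧
    (((x j, x (finShift j)) = ((2 : Fin 3), (0 : Fin 3)) ∧ (y j, y (finShift j)) = (1, 1)) ∨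
     ((x j, x (finShift j)) = (1, 1) ∧ (y j, y (finShift j)) = (2, 0)) ∨
     ((x j, x (finShift j)) = (1, 2) ∧ (y j, y (finShift j)) = (2, 1)) ∨
     ((x j, x (finShift j)) = (2, 1) ∧ (y j, y (finShift j)) = (1, 2)) ∨
     ((x j, x (finShift j)) = (1, 0) ∧ (y j, y (finShift j)) = (0, 1)) ∨
     ((x j, x (finShift j)) = (0, 1) ∧ (y j, y (finShift j)) = (1, 0)))


lemma abs_wsum_le {L : ℕ} (w : Conf3 L) : |wsum w| ≤ L := by
  unfold wsum
  calc |∑ j, (((w j : ℕ) : ℤ) - 1)| ≤ ∑ j : Fin L, |(((w j : ℕ) : ℤ) - 1)| :=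
        Finset.abs_sum_le_sum_abs _ _
    _ ≤ ∑ _j : Fin L, 1 := by
        refine Finset.sum_le_sum fun j _ => ?_
        have := (w j).isLt
        rw [abs_sub_le_iff]; omega
    _ = L := by simp
lemma gcard_pos (L : ℕ) (m : ℤ) (h : |m| ≤ L) : 0 < gcard L m := by
  classical
  have hk : m.natAbs ≤ L := by
    rw [abs_le] at h; omega
  refine Finset.card_pos.mpr ⟨fun i => if i.1 < m.natAbs then (if 0 ≤ m then 2 else 0) else 1, ?_⟩
  simp only [Finset.mem_filter, Finset.mem_univ, true_and]
  unfold wsum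
  have key : ∀ s : ℤ, ∑ j : Fin L, (if j.1 < m.natAbs then s else 0) = m.natAbs * s := by
    intro s
    rw [Fin.sum_univ_eq_sum_range (fun j => if j < m.natAbs then s else 0)]
    rw [Finset.sum_congr rfl (fun j hj => by
      simp only [Finset.mem_range] at hj
      show (if j < m.natAbs then s else 0) = if j ∈ Finset.range m.natAbs then s else 0
      simp [Finset.mem_range])]
    rw [Finset.sum_ite_mem, Finset.inter_eq_right.mpr (Finset.range_subset_range.mpr hk)]
    simp [mul_comm]
  by_cases hm : 0 ≤ m
  · have : ∀ j : Fin L, ((((if j.1 < m.natAbs then (if 0 ≤ m then 2 else 0) else 1 : Fin 3) : ℕ) : ℤ) - 1)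
        = (if j.1 < m.natAbs then 1 else 0) := by
      intro j; simp [hm]; split <;> simp
    rw [Finset.sum_congr rfl (fun j _ => this j), key]
    omega
  · have : ∀ j : Fin L, ((((if j.1 < m.natAbs then (if 0 ≤ m then 2 else 0) else 1 : Fin 3) : ℕ) : ℤ) - 1)
        = (if j.1 < m.natAbs then -1 else 0) := by
      intro j; simp [hm]; split <;> simp
    rw [Finset.sum_congr rfl (fun j _ => this j), key]
    omega

lemma wsum_join {N : ℕ} (d : ℕ) (hd : d ≤ N) (b : Fin (N - d) → Fin 3) (a : Fin d → Fin 3) :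
    wsum (joinConf3 d b a) = wsum b + wsum a := by
  have h : (N - d) + d = N := by omega
  unfold wsum
  let e : Fin (N - d) ⊕ Fin d ≃ Fin N := finSumFinEquiv.trans (finCongr h)
  rw [← Fintype.sum_equiv e (fun x => (((joinConf3 d b a (e x) : ℕ) : ℤ) - 1)) _ (fun x => rfl)]
  rw [Fintype.sum_sum_type]
  congr 1
  · refine Finset.sum_congr rfl fun i _ => ?_
    have he : (e (Sum.inl i)).1 = i.1 := rfl
    unfold joinConf3
    rw [dif_pos (he ▸ i.isLt)]
    congr 1
  · refine Finset.sum_congr rfl fun i _ => ?_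
    have he : (e (Sum.inr i)).1 = (N - d) + i.1 := by
      simp [e, finSumFinEquiv, Fin.natAdd]
    unfold joinConf3
    rw [dif_neg (by omega)]
    simp only [he, Nat.add_sub_cancel_left, Fin.eta]

lemma gRDM_apply (N d : ℕ) (hd : d ≤ N) (m : ℤ) (a a' : Conf3 d) :
    gRDM N d m a a' = if wsum a = wsum a'
      then (((gcard (N - d) (m - wsum a) : ℝ) / (gcard N m : ℝ) : ℝ) : ℂ) else 0 := by
  classical
  unfold gRDM gstate
  have hterm : ∀ b : Fin (N - d) → Fin 3,
      (if wsum (joinConf3 d b a) = m then ((Real.sqrt (gcard N m) : ℝ)⁻¹ : ℂ) else 0) *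
        star (if wsum (joinConf3 d b a') = m then ((Real.sqrt (gcard N m) : ℝ)⁻¹ : ℂ) else 0)
      = if wsum b = m - wsum a ∧ wsum b = m - wsum a'
          then (((gcard N m : ℝ)⁻¹ : ℝ) : ℂ) else 0 := by
    intro b
    rw [wsum_join d hd, wsum_join d hd]
    by_cases h1 : wsum b + wsum a = m <;> by_cases h2 : wsum b + wsum a' = m
    · rw [if_pos h1, if_pos h2, if_pos ⟨by omega, by omega⟩]
      rw [Complex.star_def, ← Complex.ofReal_inv, Complex.conj_ofReal, ← Complex.ofReal_mul]
      congr 1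
      rw [← mul_inv, Real.mul_self_sqrt (Nat.cast_nonneg _)]
    · rw [if_pos h1, if_neg h2, star_zero, mul_zero, if_neg (by omega)]
    · rw [if_neg h1, zero_mul, if_neg (by omega)]
    · rw [if_neg h1, zero_mul, if_neg (by omega)]
  rw [Finset.sum_congr rfl fun b _ => hterm b]
  by_cases h : wsum a = wsum a'
  · rw [if_pos h]
    have : ∀ b : Fin (N - d) → Fin 3, (wsum b = m - wsum a ∧ wsum b = m - wsum a') ↔
        wsum b = m - wsum a := by intro b; rw [h]; tauto
    simp_rw [this]
    rw [Finset.sum_ite, Finset.sum_const_zero, add_zero, Finset.sum_const, nsmul_eq_mul]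
    have hc : (Finset.univ.filter fun x : Fin (N - d) → Fin 3 => wsum x = m - wsum a).card
        = gcard (N - d) (m - wsum a) := rfl
    rw [hc]
    push_cast
    ring
  · rw [if_neg h]
    refine Finset.sum_eq_zero fun b _ => ?_
    rw [if_neg (by omega)]

lemma sum_ite_wsum {L : ℕ} (r : ℤ) (f : ℤ → ℂ) :
    (∑ b : Conf3 L, if wsum b = r then f (wsum b) else 0) = (gcard L r : ℂ) * f r := by
  classical
  rw [Finset.sum_congr rfl (fun b (_ : b ∈ Finset.univ) => show
      (if wsum b = r then f (wsum b) else 0) = (if wsum b = r then f r else 0) by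
    split_ifs with h
    · rw [h]
    · rfl)]
  rw [Finset.sum_ite, Finset.sum_const_zero, add_zero, Finset.sum_const, nsmul_eq_mul]
  rfl

open scoped MatrixOrder in
lemma psd_eq_sqrt_aux {n : Type*} [Fintype n] [DecidableEq n] (S A : Matrix n n ℂ)
    (hS : S.PosSemidef) (h : S ^ 2 = A.conjTranspose * A) :
    S = (let hA := Matrix.posSemidef_conjTranspose_mul_self A;
      (hA.1.eigenvectorUnitary.1 *
        Matrix.diagonal (fun i => ((Real.sqrt (hA.1.eigenvalues i) : ℝ) : ℂ)) *
        (star hA.1.eigenvectorUnitary : Matrix n n ℂ))) := by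
  have hA := Matrix.posSemidef_conjTranspose_mul_self A
  have h1 := hA.1.cfc_eq Real.sqrt
  rw [← cfcₙ_eq_cfc (hf0 := Real.sqrt_zero), ← CFC.sqrt_eq_real_sqrt _ hA.nonneg, CFC.sqrt_unique (b := S) (by rw [← h, pow_two]) hS.nonneg] at h1
  rw [h1, Matrix.IsHermitian.cfc, Unitary.conjStarAlgAut_apply]
  rfl

/-- exact formula for the trace distance between reduced density
matrices of the states `|g_m^N⟩` on `d` consecutive sites. -/
theorem motzkin_trace_distance_formula
    (N d : ℕ) (hN : 1 ≤ N) (hd : 1 ≤ d) (hdN : d ≤ N - 1) (m m' : ℤ)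
    (hm : |m| ≤ (N : ℤ) - d) (hm' : |m'| ≤ (N : ℤ) - d) :
    traceNorm (gRDM N d m - gRDM N d m')
      = ∑ r ∈ Finset.Icc (-(d : ℤ)) (d : ℤ),
          (gcard d r : ℝ) *
            |(gcard (N - d) (m - r) : ℝ) / (gcard N m : ℝ)
              - (gcard (N - d) (m' - r) : ℝ) / (gcard N m' : ℝ)| := by
  classical
  have hdN' : d ≤ N := by omega
  set lam : ℤ → ℝ := fun r =>
    (gcard (N - d) (m - r) : ℝ) / (gcard N m : ℝ)
      - (gcard (N - d) (m' - r) : ℝ) / (gcard N m' : ℝ) with hlam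
  have hgd : ∀ a : Conf3 d, gcard d (wsum a) ≠ 0 := fun a =>
    (gcard_pos d (wsum a) (abs_wsum_le a)).ne'
  set M : Matrix (Conf3 d) (Conf3 d) ℂ := gRDM N d m - gRDM N d m' with hMdef
  have hM : ∀ a a' : Conf3 d, M a a'
      = if wsum a = wsum a' then ((lam (wsum a) : ℝ) : ℂ) else 0 := by
    intro a a'
    rw [hMdef, Matrix.sub_apply, gRDM_apply N d hdN' m a a', gRDM_apply N d hdN' m' a a']
    split_ifs with h
    · rw [← Complex.ofReal_sub]
    · rw [sub_zero]
  set S : Matrix (Conf3 d) (Conf3 d) ℂ := fun a a' =>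
    if wsum a = wsum a' then ((|lam (wsum a)| : ℝ) : ℂ) else 0 with hSdef
  set B : Matrix (Conf3 d) (Conf3 d) ℂ := fun a a' =>
    if wsum a = wsum a' then ((Real.sqrt (|lam (wsum a)| / (gcard d (wsum a) : ℝ)) : ℝ) : ℂ)
      else 0 with hBdef
  -- S = B.conjTranspose * B, hence PSD
  have hSB : S = B.conjTranspose * B := by
    ext a a'
    rw [Matrix.mul_apply]
    simp only [Matrix.conjTranspose_apply]
    simp only [hBdef, hSdef]
    have hterm : ∀ b : Conf3 d,
        star (if wsum b = wsum a then
            ((Real.sqrt (|lam (wsum b)| / (gcard d (wsum b) : ℝ)) : ℝ) : ℂ) else 0) *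
          (if wsum b = wsum a' then
            ((Real.sqrt (|lam (wsum b)| / (gcard d (wsum b) : ℝ)) : ℝ) : ℂ) else 0)
        = if wsum b = wsum a ∧ wsum b = wsum a'
            then ((|lam (wsum b)| / (gcard d (wsum b) : ℝ) : ℝ) : ℂ) else 0 := by
      intro b
      by_cases h1 : wsum b = wsum a <;> by_cases h2 : wsum b = wsum a'
      · rw [if_pos h1, if_pos h2, if_pos ⟨h1, h2⟩, Complex.star_def, Complex.conj_ofReal,
          ← Complex.ofReal_mul, Real.mul_self_sqrt (by positivity)]
      · rw [if_pos h1, if_neg h2, mul_zero, if_neg (by tauto)]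
      · rw [if_neg h1, star_zero, zero_mul, if_neg (by tauto)]
      · rw [if_neg h1, star_zero, zero_mul, if_neg (by tauto)]
    rw [Finset.sum_congr rfl fun b _ => hterm b]
    by_cases h : wsum a = wsum a'
    · rw [if_pos h]
      rw [Finset.sum_congr rfl (fun b (_ : b ∈ Finset.univ) => show
          (if wsum b = wsum a ∧ wsum b = wsum a' then
            ((|lam (wsum b)| / (gcard d (wsum b) : ℝ) : ℝ) : ℂ) else 0)
          = (if wsum b = wsum a then
            ((|lam (wsum b)| / (gcard d (wsum b) : ℝ) : ℝ) : ℂ) else 0) by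
        split_ifs with h1 h2 h3 <;> first | rfl | (exfalso; rw [h] at *; tauto))]
      rw [sum_ite_wsum (wsum a) (fun r => ((|lam r| / (gcard d r : ℝ) : ℝ) : ℂ))]
      rw [← Complex.ofReal_natCast, ← Complex.ofReal_mul]
      congr 1
      rw [← mul_div_assoc]
      exact (mul_div_cancel_left₀ (|lam (wsum a)|)
        (show ((gcard d (wsum a) : ℕ) : ℝ) ≠ 0 from Nat.cast_ne_zero.mpr (hgd a))).symm
    · rw [if_neg h]
      exact (Finset.sum_eq_zero fun b _ =>
        if_neg (fun hc => h (hc.1.symm.trans hc.2))).symm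
  have hSpsd : S.PosSemidef := hSB ▸ Matrix.posSemidef_conjTranspose_mul_self B
  -- S ^ 2 = M.conjTranspose * M
  have hsq : S ^ 2 = M.conjTranspose * M := by
    rw [pow_two]
    ext a a'
    rw [Matrix.mul_apply, Matrix.mul_apply]
    simp only [Matrix.conjTranspose_apply]
    have hterm1 : ∀ b : Conf3 d, S a b * S b a'
        = if wsum b = wsum a ∧ wsum b = wsum a'
            then (((lam (wsum b))^2 : ℝ) : ℂ) else 0 := by
      intro b
      simp only [hSdef]
      by_cases h1 : wsum b = wsum a <;> by_cases h2 : wsum b = wsum a'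
      · rw [if_pos h1.symm, if_pos h2, if_pos ⟨h1, h2⟩, ← Complex.ofReal_mul]
        rw [h1, abs_mul_abs_self, sq]
      · rw [if_pos h1.symm, if_neg h2, mul_zero, if_neg (by tauto)]
      · rw [if_neg (fun hh : wsum a = wsum b => h1 hh.symm), zero_mul, if_neg (by tauto)]
      · rw [if_neg (fun hh : wsum a = wsum b => h1 hh.symm), zero_mul, if_neg (by tauto)]
    have hterm2 : ∀ b : Conf3 d, star (M b a) * M b a'
        = if wsum b = wsum a ∧ wsum b = wsum a'
            then (((lam (wsum b))^2 : ℝ) : ℂ) else 0 := by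
      intro b
      rw [hM b a, hM b a']
      by_cases h1 : wsum b = wsum a <;> by_cases h2 : wsum b = wsum a'
      · rw [if_pos h1, if_pos h2, if_pos ⟨h1, h2⟩, Complex.star_def, Complex.conj_ofReal,
          ← Complex.ofReal_mul, sq]
      · rw [if_pos h1, if_neg h2, mul_zero, if_neg (by tauto)]
      · rw [if_neg h1, star_zero, zero_mul, if_neg (by tauto)]
      · rw [if_neg h1, star_zero, zero_mul, if_neg (by tauto)]
    rw [Finset.sum_congr rfl fun b _ => hterm1 b, Finset.sum_congr rfl fun b _ => hterm2 b]
  have hSsqrt := psd_eq_sqrt_aux S M hSpsd hsq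
  rw [traceNorm, ← hSsqrt]
  have htr : S.trace = ((∑ a : Conf3 d, |lam (wsum a)| : ℝ) : ℂ) := by
    rw [Matrix.trace, Complex.ofReal_sum]
    refine Finset.sum_congr rfl fun a _ => ?_
    rw [Matrix.diag_apply, hSdef]
    exact if_pos rfl
  rw [htr, Complex.ofReal_re]
  -- regroup by the value of wsum
  rw [← Finset.sum_fiberwise_of_maps_to (g := wsum)
    (fun a (_ : a ∈ Finset.univ) => Finset.mem_Icc.mpr (abs_le.mp (abs_wsum_le a)))]
  refine Finset.sum_congr rfl fun r _ => ?_
  rw [Finset.sum_congr rfl (fun a ha => by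
    rw [(Finset.mem_filter.mp ha).2]), Finset.sum_const, nsmul_eq_mul]
  rfl


end
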